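/- arXiv:2011.12392 — 3 statements merged into one kernel-verified Lean document; each statement's English description precedes it below -/
import Mathlib

section
/- Let W : ℝ^q → ℝ be differentiable with L-Lipschitz gradient (L ≥ 0). Let s ∈ ℝ^q, let B be a self-adjoint continuous linear operator on ℝ^q satisfying v_min ‖a‖² ≤ ⟨B a, a⟩ ≤ v_max ‖a‖² for all a ∈ ℝ^q, where 0 < v_min ≤ v_max, and let h ∈ ℝ^q be such that ∇W(s) = −B h. Then for every γ > 0 and every S ∈ ℝ^q: W(s + γ S) − W(s) ≤ −(γ/2)(v_min − γ L) ‖S‖² − (γ v_min / 2) ‖h‖² + (γ v_max / 2) ‖h − S‖². -/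
open scoped RealInnerProductSpace

lemma descent_lemma (q : ℕ) (W : EuclideanSpace ℝ (Fin q) → ℝ)
    (hW : Differentiable ℝ W) (L : ℝ) (hL : 0 ≤ L)
    (hLip : LipschitzWith L.toNNReal (gradient W))
    (s v : EuclideanSpace ℝ (Fin q)) :
    W (s + v) ≤ W s + ⟪gradient W s, v⟫ + L / 2 * ‖v‖ ^ 2 := by
  set g : ℝ → ℝ := fun t => W (s + t • v) - t * ⟪gradient W s, v⟫ - L / 2 * t ^ 2 * ‖v‖ ^ 2
    with hg
  have hline : ∀ t : ℝ, HasDerivAt (fun t : ℝ => s + t • v) v t := by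
    intro t
    simpa using ((hasDerivAt_id t).smul_const v).const_add s
  have hphi : ∀ t : ℝ, HasDerivAt (fun t : ℝ => W (s + t • v))
      ⟪gradient W (s + t • v), v⟫ t := by
    intro t
    have h1 : HasGradientAt W (gradient W (s + t • v)) (s + t • v) :=
      (hW _).hasGradientAt
    have h2 := (hasGradientAt_iff_hasFDerivAt.mp h1).comp_hasDerivAt t (hline t)
    simp at h2 ⊢
    exact h2
  have hgd : ∀ t : ℝ, HasDerivAt g
      (⟪gradient W (s + t • v), v⟫ - ⟪gradient W s, v⟫ - L * t * ‖v‖ ^ 2) t := by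
    intro t
    have h3 : HasDerivAt (fun t : ℝ => t * ⟪gradient W s, v⟫) ⟪gradient W s, v⟫ t := by
      simpa using (hasDerivAt_id t).mul_const (⟪gradient W s, v⟫ : ℝ)
    have h4 : HasDerivAt (fun t : ℝ => L / 2 * t ^ 2 * ‖v‖ ^ 2) (L * t * ‖v‖ ^ 2) t := by
      have := ((hasDerivAt_pow 2 t).const_mul (L / 2)).mul_const (‖v‖ ^ 2)
      refine this.congr_deriv ?_
      simp only [Nat.cast_ofNat, Nat.add_one_sub_one, pow_one]
      ring
    have := ((hphi t).sub h3).sub h4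
    exact this
  have hanti : AntitoneOn g (Set.Icc (0:ℝ) 1) := by
    apply antitoneOn_of_deriv_nonpos (convex_Icc 0 1)
    · exact fun t _ => ((hgd t).differentiableAt).continuousAt.continuousWithinAt
    · exact fun t _ => ((hgd t).differentiableAt).differentiableWithinAt
    · intro t ht
      rw [interior_Icc] at ht
      rw [(hgd t).deriv]
      have hb : ⟪gradient W (s + t • v) - gradient W s, v⟫ ≤ L * t * ‖v‖ ^ 2 := by
        calc ⟪gradient W (s + t • v) - gradient W s, v⟫
            ≤ ‖gradient W (s + t • v) - gradient W s‖ * ‖v‖ := real_inner_le_norm _ _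
          _ ≤ (L * ‖t • v‖) * ‖v‖ := by
              have := hLip.dist_le_mul (s + t • v) s
              have hc : (L.toNNReal : ℝ) = L := Real.coe_toNNReal L hL
              rw [dist_eq_norm, dist_eq_norm, hc] at this
              simp only [add_sub_cancel_left] at this
              exact mul_le_mul_of_nonneg_right this (norm_nonneg v)
          _ = L * t * ‖v‖ ^ 2 := by
              rw [norm_smul, Real.norm_eq_abs, abs_of_pos ht.1]; ring
      rw [inner_sub_left] at hb
      linarith
  have key := hanti (Set.left_mem_Icc.mpr zero_le_one) (Set.right_mem_Icc.mpr zero_le_one)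
    zero_le_one
  simp only [hg, one_smul, zero_smul, add_zero, one_mul, one_pow, zero_pow, mul_zero,
    zero_mul, sub_zero, mul_one] at key
  linarith

/-- **Proposition (one-step descent with spectral bounds).**
If `W : ℝ^q → ℝ` is differentiable with `L`-Lipschitz gradient, `B` is self-adjoint with
`v_min ‖a‖² ≤ ⟨Ba,a⟩ ≤ v_max ‖a‖²` (`0 < v_min ≤ v_max`), and `∇W(s) = -B h`, then for all
`γ > 0` and `S`,
`W(s + γS) - W(s) ≤ -(γ/2)(v_min - γL)‖S‖² - (γ v_min/2)‖h‖² + (γ v_max/2)‖h - S‖²`. -/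
theorem stmt_9 (q : ℕ) (W : EuclideanSpace ℝ (Fin q) → ℝ)
    (hW : Differentiable ℝ W) (L : ℝ) (hL : 0 ≤ L)
    (hLip : LipschitzWith L.toNNReal (gradient W))
    (s : EuclideanSpace ℝ (Fin q))
    (B : EuclideanSpace ℝ (Fin q) →L[ℝ] EuclideanSpace ℝ (Fin q))
    (hB : ∀ x y, ⟪B x, y⟫ = ⟪x, B y⟫)
    (vmin vmax : ℝ) (hvmin : 0 < vmin) (hvminmax : vmin ≤ vmax)
    (hspec : ∀ a : EuclideanSpace ℝ (Fin q),
      vmin * ‖a‖ ^ 2 ≤ ⟪B a, a⟫ ∧ ⟪B a, a⟫ ≤ vmax * ‖a‖ ^ 2)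
    (h : EuclideanSpace ℝ (Fin q)) (hgrad : gradient W s = -(B h))
    (γ : ℝ) (hγ : 0 < γ) (S : EuclideanSpace ℝ (Fin q)) :
    W (s + γ • S) - W s
      ≤ -(γ / 2) * (vmin - γ * L) * ‖S‖ ^ 2 - (γ * vmin / 2) * ‖h‖ ^ 2
          + (γ * vmax / 2) * ‖h - S‖ ^ 2 := by
  have key := descent_lemma q W hW L hL hLip s (γ • S)
  have hnorm : ‖γ • S‖ ^ 2 = γ ^ 2 * ‖S‖ ^ 2 := by
    rw [norm_smul, Real.norm_eq_abs, mul_pow, sq_abs]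
  have hinner : ⟪gradient W s, γ • S⟫ = -(γ * ⟪B h, S⟫) := by
    rw [hgrad, real_inner_smul_right, inner_neg_left]
    ring
  -- polarization
  have hpol : ⟪B (h - S), h - S⟫ = ⟪B h, h⟫ - 2 * ⟪B h, S⟫ + ⟪B S, S⟫ := by
    have hBS : ⟪B S, h⟫ = ⟪B h, S⟫ := by
      rw [hB S h, real_inner_comm]
    rw [map_sub, inner_sub_left, inner_sub_right, inner_sub_right, hBS]
    ring
  have h1 := (hspec h).1
  have h2 := (hspec S).1
  have h3 := (hspec (h - S)).2
  have hBhS : -(γ * ⟪B h, S⟫) ≤ -(γ * vmin / 2) * ‖h‖ ^ 2 - (γ * vmin / 2) * ‖S‖ ^ 2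
      + (γ * vmax / 2) * ‖h - S‖ ^ 2 := by
    nlinarith [hγ.le]
  rw [hnorm, hinner] at key
  nlinarith [hγ.le]
end

section
/- Let W : ℝ^q → ℝ be differentiable with L-Lipschitz gradient (L ≥ 0). Let s ∈ ℝ^q, let B be a self-adjoint continuous linear operator on ℝ^q satisfying v_min ‖a‖² ≤ ⟨B a, a⟩ ≤ v_max ‖a‖² for all a ∈ ℝ^q, where 0 < v_min ≤ v_max, and let h ∈ ℝ^q be such that ∇W(s) = −B h. Then for every γ ≥ 0 and every ε ∈ ℝ^q (perturbation of the full-batch refresh): W(s + γ (h + ε)) − W(s) ≤ −(γ v_min / 2) ‖h‖² + (γ v_max / 2) ‖ε‖² − (γ/2)(v_min − γ L) ‖h + ε‖². -/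
open scoped RealInnerProductSpace

lemma descent_aux {q : ℕ} {W : EuclideanSpace ℝ (Fin q) → ℝ}
    (hW : Differentiable ℝ W) {L : ℝ} (hL : 0 ≤ L)
    (hLip : LipschitzWith L.toNNReal (gradient W))
    (s u : EuclideanSpace ℝ (Fin q)) :
    W (s + u) - W s ≤ ⟪gradient W s, u⟫ + L / 2 * ‖u‖ ^ 2 := by
  set c : ℝ → EuclideanSpace ℝ (Fin q) := fun t => s + t • u with hc
  have hcd : ∀ t : ℝ, HasDerivAt c u t := by
    intro t
    simpa [hc] using ((hasDerivAt_id t).smul_const u).const_add s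
  have hWd : ∀ t : ℝ, HasDerivAt (fun t => W (c t)) ⟪gradient W (c t), u⟫ t := by
    intro t
    have h1 : HasFDerivAt W (InnerProductSpace.toDual ℝ _ (gradient W (c t))) (c t) :=
      (hasGradientAt_iff_hasFDerivAt).1 ((hW (c t)).hasGradientAt)
    simpa [Function.comp_def] using h1.comp_hasDerivAt t (hcd t)
  set g : ℝ → ℝ := fun t => W (c t) - t * ⟪gradient W s, u⟫ - L / 2 * t ^ 2 * ‖u‖ ^ 2 with hg
  have hgd : ∀ t : ℝ, HasDerivAt g
      (⟪gradient W (c t), u⟫ - ⟪gradient W s, u⟫ - L * t * ‖u‖ ^ 2) t := by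
    intro t
    have h2 : HasDerivAt (fun t : ℝ => t * ⟪gradient W s, u⟫) ⟪gradient W s, u⟫ t := by
      simpa using (hasDerivAt_id t).mul_const _
    have h3 : HasDerivAt (fun t : ℝ => L / 2 * t ^ 2 * ‖u‖ ^ 2) (L * t * ‖u‖ ^ 2) t := by
      have := ((hasDerivAt_pow 2 t).const_mul (L / 2)).mul_const (‖u‖ ^ 2)
      refine this.congr_deriv ?_
      rw [show (2:ℕ) - 1 = 1 from rfl]
      ring
    exact ((hWd t).sub h2).sub h3
  have hderiv_nonpos : ∀ t ∈ Set.Icc (0:ℝ) 1,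
      ⟪gradient W (c t), u⟫ - ⟪gradient W s, u⟫ - L * t * ‖u‖ ^ 2 ≤ 0 := by
    intro t ht
    have hip : ⟪gradient W (c t) - gradient W s, u⟫
        ≤ ‖gradient W (c t) - gradient W s‖ * ‖u‖ :=
      real_inner_le_norm _ _
    have hlip : ‖gradient W (c t) - gradient W s‖ ≤ L * (t * ‖u‖) := by
      have hdl := hLip.dist_le_mul (c t) s
      have hcs : c t - s = t • u := by simp [hc]
      have ht0 : 0 ≤ t := ht.1
      calc ‖gradient W (c t) - gradient W s‖ = dist (gradient W (c t)) (gradient W s) :=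
            (dist_eq_norm _ _).symm
        _ ≤ L.toNNReal * dist (c t) s := hdl
        _ = L * ‖t • u‖ := by
            rw [dist_eq_norm, hcs, Real.coe_toNNReal _ hL]
        _ = L * (t * ‖u‖) := by rw [norm_smul, Real.norm_eq_abs, abs_of_nonneg ht0]
    have hu0 : (0:ℝ) ≤ ‖u‖ := norm_nonneg _
    have := mul_le_mul_of_nonneg_right hlip hu0
    have hsub : ⟪gradient W (c t) - gradient W s, u⟫
        = ⟪gradient W (c t), u⟫ - ⟪gradient W s, u⟫ := inner_sub_left _ _ _
    nlinarith [hip, hsub]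
  have hcont : ContinuousOn g (Set.Icc 0 1) := fun t _ => (hgd t).continuousAt.continuousWithinAt
  have hanti : AntitoneOn g (Set.Icc 0 1) := by
    apply antitoneOn_of_deriv_nonpos (convex_Icc 0 1) hcont
    · intro t ht
      exact ((hgd t).differentiableAt).differentiableWithinAt
    · intro t ht
      rw [interior_Icc] at ht
      rw [(hgd t).deriv]
      exact hderiv_nonpos t ⟨le_of_lt ht.1, le_of_lt ht.2⟩
  have h01 : g 1 ≤ g 0 := hanti (Set.left_mem_Icc.2 zero_le_one)
    (Set.right_mem_Icc.2 zero_le_one) zero_le_one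
  have hc0 : c 0 = s := by simp [hc]
  have hc1 : c 1 = s + u := by simp [hc]
  simp only [hg, hc0, hc1] at h01
  nlinarith [h01]

/-- **Proposition (one-step decrease at the refresh step of g-SPIDER-EM).**
If `W : ℝ^q → ℝ` is differentiable with `L`-Lipschitz gradient, `B` is self-adjoint with
`v_min ‖a‖² ≤ ⟨Ba,a⟩ ≤ v_max ‖a‖²` (`0 < v_min ≤ v_max`), and `∇W(s) = -B h`, then for all
`γ ≥ 0` and every perturbation `ε`,
`W(s + γ(h+ε)) - W(s) ≤ -(γ v_min/2)‖h‖² + (γ v_max/2)‖ε‖² - (γ/2)(v_min - γL)‖h+ε‖²`. -/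
theorem stmt_10 (q : ℕ) (W : EuclideanSpace ℝ (Fin q) → ℝ)
    (hW : Differentiable ℝ W) (L : ℝ) (hL : 0 ≤ L)
    (hLip : LipschitzWith L.toNNReal (gradient W))
    (s : EuclideanSpace ℝ (Fin q))
    (B : EuclideanSpace ℝ (Fin q) →L[ℝ] EuclideanSpace ℝ (Fin q))
    (hB : ∀ x y, ⟪B x, y⟫ = ⟪x, B y⟫)
    (vmin vmax : ℝ) (hvmin : 0 < vmin) (hvminmax : vmin ≤ vmax)
    (hspec : ∀ a : EuclideanSpace ℝ (Fin q),
      vmin * ‖a‖ ^ 2 ≤ ⟪B a, a⟫ ∧ ⟪B a, a⟫ ≤ vmax * ‖a‖ ^ 2)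
    (h : EuclideanSpace ℝ (Fin q)) (hgrad : gradient W s = -(B h))
    (γ : ℝ) (hγ : 0 ≤ γ) (ε : EuclideanSpace ℝ (Fin q)) :
    W (s + γ • (h + ε)) - W s
      ≤ -(γ * vmin / 2) * ‖h‖ ^ 2 + (γ * vmax / 2) * ‖ε‖ ^ 2
          - (γ / 2) * (vmin - γ * L) * ‖h + ε‖ ^ 2 := by
  have hdes := descent_aux hW hL hLip s (γ • (h + ε))
  have hnorm : ‖γ • (h + ε)‖ ^ 2 = γ ^ 2 * ‖h + ε‖ ^ 2 := by
    rw [norm_smul, Real.norm_eq_abs, mul_pow, sq_abs]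
  have hinner : ⟪gradient W s, γ • (h + ε)⟫ = -(γ * ⟪B h, h + ε⟫) := by
    rw [hgrad, real_inner_smul_right, inner_neg_left]
    ring
  -- polarization of the quadratic form
  have hpol : ⟪(B : EuclideanSpace ℝ (Fin q) →L[ℝ] EuclideanSpace ℝ (Fin q)) (h + ε), h + ε⟫
      = ⟪B h, h⟫ + 2 * ⟪B h, ε⟫ + ⟪B ε, ε⟫ := by
    have hEh : ⟪B ε, h⟫ = ⟪B h, ε⟫ := by
      rw [hB ε h, real_inner_comm]
    rw [map_add, inner_add_left, inner_add_right, inner_add_right, hEh]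
    ring
  have h1 := (hspec h).1
  have h2 := (hspec ε).2
  have h3 := (hspec (h + ε)).1
  have key : -(γ * ⟪B h, h + ε⟫)
      ≤ -(γ * vmin / 2) * ‖h‖ ^ 2 + (γ * vmax / 2) * ‖ε‖ ^ 2
        - (γ * vmin / 2) * ‖h + ε‖ ^ 2 := by
    have hsplit : ⟪(B : EuclideanSpace ℝ (Fin q) →L[ℝ] EuclideanSpace ℝ (Fin q)) h, h + ε⟫
        = (⟪B h, h⟫ + ⟪B (h + ε), h + ε⟫ - ⟪B ε, ε⟫) / 2 := by
      rw [inner_add_right, hpol]; ring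
    rw [hsplit]
    nlinarith [mul_le_mul_of_nonneg_left h1 hγ, mul_le_mul_of_nonneg_left h2 hγ,
      mul_le_mul_of_nonneg_left h3 hγ]
  calc W (s + γ • (h + ε)) - W s
      ≤ ⟪gradient W s, γ • (h + ε)⟫ + L / 2 * ‖γ • (h + ε)‖ ^ 2 := hdes
    _ = -(γ * ⟪B h, h + ε⟫) + L / 2 * (γ ^ 2 * ‖h + ε‖ ^ 2) := by rw [hinner, hnorm]
    _ ≤ -(γ * vmin / 2) * ‖h‖ ^ 2 + (γ * vmax / 2) * ‖ε‖ ^ 2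
          - (γ / 2) * (vmin - γ * L) * ‖h + ε‖ ^ 2 := by nlinarith [key]
end

section
/- Let ρ ∈ (0,1), c > 0, e ≥ 0, m ∈ ℝ, and let h : ℕ → ℝ be nonnegative and w : ℕ → ℝ be such that w_k ≥ m for all k, with ∑_{k≥0} ρ^k h_k < ∞ and ∑_{k≥0} ρ^k |w_k| < ∞. Write E[x_ξ] := (1−ρ)·∑_{k=1}^∞ ρ^{k−1} x_k and E[x_{ξ−1}] := (1−ρ)·∑_{k=1}^∞ ρ^{k−1} x_{k−1}. If (c/(1−ρ)) · E[h_{ξ−1}] ≤ w_0 − E[w_ξ] + e, then E[h_ξ] ≤ ((1−ρ)/(c ρ)) · (w_0 − m + e). -/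
set_option maxHeartbeats 1000000

/-- **Lemma (per-epoch bound from the main theorem, deterministic core).**
Let `ρ ∈ (0,1)`, `c > 0`, `e ≥ 0`, `m ∈ ℝ`, `h : ℕ → ℝ` nonnegative, `w : ℕ → ℝ` with
`w_k ≥ m` for all `k`, `∑ ρ^k h_k < ∞` and `∑ ρ^k |w_k| < ∞`. Writing
`E[x_ξ] := (1-ρ) ∑_{k≥1} ρ^{k-1} x_k` and `E[x_{ξ-1}] := (1-ρ) ∑_{k≥1} ρ^{k-1} x_{k-1}`, if
`(c/(1-ρ)) E[h_{ξ-1}] ≤ w_0 - E[w_ξ] + e`, then `E[h_ξ] ≤ ((1-ρ)/(cρ)) (w_0 - m + e)`. -/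
theorem stmt_14 (ρ : ℝ) (hρ : ρ ∈ Set.Ioo (0 : ℝ) 1) (c e m : ℝ)
    (hc : 0 < c) (he : 0 ≤ e)
    (h w : ℕ → ℝ) (hh : ∀ k, 0 ≤ h k) (hw : ∀ k, m ≤ w k)
    (hsumh : Summable fun k : ℕ => ρ ^ k * h k)
    (hsumw : Summable fun k : ℕ => ρ ^ k * |w k|)
    (hmain : c / (1 - ρ) * ((1 - ρ) * ∑' k : ℕ, ρ ^ k * h k)
      ≤ w 0 - (1 - ρ) * ∑' k : ℕ, ρ ^ k * w (k + 1) + e) :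
    (1 - ρ) * ∑' k : ℕ, ρ ^ k * h (k + 1)
      ≤ (1 - ρ) / (c * ρ) * (w 0 - m + e) := by
  obtain ⟨hρ0, hρ1⟩ := hρ
  have hr : (0:ℝ) < 1 - ρ := by linarith
  -- shifted summability for h
  have hsumh1 : Summable fun k : ℕ => ρ ^ (k + 1) * h (k + 1) :=
    (summable_nat_add_iff 1).2 hsumh
  have hsumh' : Summable fun k : ℕ => ρ ^ k * h (k + 1) := by
    have := hsumh1.mul_left ρ⁻¹
    convert this using 2 with k
    · rfl
    field_simp [pow_succ]
    ring
  -- shifted summability for w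
  have hsumw1 : Summable fun k : ℕ => ρ ^ (k + 1) * |w (k + 1)| :=
    (summable_nat_add_iff 1).2 hsumw
  have hsumw'abs : Summable fun k : ℕ => ρ ^ k * |w (k + 1)| := by
    have := hsumw1.mul_left ρ⁻¹
    convert this using 2 with k
    · rfl
    field_simp [pow_succ]
    ring
  have hsumw' : Summable fun k : ℕ => ρ ^ k * w (k + 1) := by
    apply Summable.of_abs
    convert hsumw'abs using 2 with k
    · rfl
    rw [abs_mul, abs_of_nonneg (pow_nonneg hρ0.le k)]
  -- geometric series
  have hgeo : Summable fun k : ℕ => ρ ^ k := summable_geometric_of_lt_one hρ0.le hρ1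
  have hgeosum : ∑' k : ℕ, ρ ^ k = (1 - ρ)⁻¹ := tsum_geometric_of_lt_one hρ0.le hρ1
  -- lower bound on E[w_ξ]
  have hwlb : m ≤ (1 - ρ) * ∑' k : ℕ, ρ ^ k * w (k + 1) := by
    have h1 : ∑' k : ℕ, ρ ^ k * m ≤ ∑' k : ℕ, ρ ^ k * w (k + 1) := by
      apply Summable.tsum_le_tsum _ (hgeo.mul_right m) hsumw'
      intro k
      exact mul_le_mul_of_nonneg_left (hw (k + 1)) (pow_nonneg hρ0.le k)
    have h2 : ∑' k : ℕ, ρ ^ k * m = (1 - ρ)⁻¹ * m := by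
      rw [tsum_mul_right, hgeosum, mul_comm]
    rw [h2] at h1
    calc m = (1 - ρ) * ((1 - ρ)⁻¹ * m) := by field_simp
    _ ≤ (1 - ρ) * ∑' k : ℕ, ρ ^ k * w (k + 1) := by
        exact mul_le_mul_of_nonneg_left h1 hr.le
  -- simplify hmain
  have hmain' : c * ∑' k : ℕ, ρ ^ k * h k ≤ w 0 - m + e := by
    have : c / (1 - ρ) * ((1 - ρ) * ∑' k : ℕ, ρ ^ k * h k)
        = c * ∑' k : ℕ, ρ ^ k * h k := by
        field_simp
    rw [this] at hmain
    linarith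
  -- relation between the two h-sums
  have hsplit : ∑' k : ℕ, ρ ^ k * h k = h 0 + ∑' k : ℕ, ρ ^ (k + 1) * h (k + 1) := by
    rw [Summable.tsum_eq_zero_add hsumh]
    simp
  have htail : ∑' k : ℕ, ρ ^ (k + 1) * h (k + 1) = ρ * ∑' k : ℕ, ρ ^ k * h (k + 1) := by
    rw [← tsum_mul_left]
    congr 1 with k
    ring
  have hS1nonneg : 0 ≤ ∑' k : ℕ, ρ ^ k * h (k + 1) :=
    tsum_nonneg fun k => mul_nonneg (pow_nonneg hρ0.le k) (hh _)
  have hkey : ρ * ∑' k : ℕ, ρ ^ k * h (k + 1) ≤ ∑' k : ℕ, ρ ^ k * h k := by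
    rw [hsplit, htail]
    linarith [hh 0]
  -- combine
  have hfin : c * ρ * ∑' k : ℕ, ρ ^ k * h (k + 1) ≤ w 0 - m + e := by
    nlinarith [hkey, hmain']
  rw [div_mul_eq_mul_div, le_div_iff₀ (by positivity : (0:ℝ) < c * ρ)]
  nlinarith [hfin]
end
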